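/- arXiv:2010.05521 — 3 statements merged into one kernel-verified Lean document; each statement's English description precedes it below -/
import Mathlib

section
/- For every nonnegative integer n, the sum over all words w of length n over {a,b} of m(awb) equals β·x·y·(αx+βy)^n. -/
/-- Number of occurrences of the consecutive pair `cd` in the word `u`
(over the alphabet `{a,b}` encoded as `a = true`, `b = false`). -/
def pairCount (c d : Bool) (u : List Bool) : ℕ :=
  (u.zip u.tail).count (c, d)

/-- The monomial `m(u) = x^{|u|_a} y^{|u|_b} α^{|u|_{aa}+|u|_{ba}} β^{|u|_{ab}+|u|_{bb}}`. -/
def mWord {R : Type*} [CommRing R] (x y α β : R) (u : List Bool) : R :=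
  x ^ u.count true * y ^ u.count false *
    α ^ (pairCount true true u + pairCount false true u) *
    β ^ (pairCount true false u + pairCount false false u)

lemma mWord_step {R : Type*} [CommRing R] (x y α β : R) (b : Bool) (l : List Bool) :
    mWord x y α β (true :: b :: l) =
      (if b then α * x else β * y) * mWord x y α β (true :: l) := by
  cases l with
  | nil => cases b <;> simp [mWord, pairCount] <;> ring
  | cons h t =>
      cases b <;> cases h <;>
        simp [mWord, pairCount, List.count_cons, pow_succ] <;> ring

lemma ofFn_cons {n : ℕ} (b : Bool) (w : Fin n → Bool) :
    List.ofFn (Fin.cons b w) = b :: List.ofFn w := by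
  simp [List.ofFn_succ]

/-- Sum over all words `w` of length `n` over `{a,b}` of `m(awb)` equals
`β x y (αx + βy)^n`. -/
theorem sum_m_awb {R : Type*} [CommRing R] (x y α β : R) (n : ℕ) :
    ∑ w : Fin n → Bool,
        mWord x y α β (true :: (List.ofFn w ++ [false])) =
      β * x * y * (α * x + β * y) ^ n := by
  induction n with
  | zero =>
      simp [mWord, pairCount]
      ring
  | succ n ih =>
      rw [← Equiv.sum_comp (Fin.consEquiv (fun _ : Fin (n+1) => Bool))
        (fun w => mWord x y α β (true :: (List.ofFn w ++ [false])))]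
      rw [Fintype.sum_prod_type]
      simp only [Fin.consEquiv, Equiv.coe_fn_mk, ofFn_cons, List.cons_append, mWord_step]
      rw [Fintype.sum_bool]
      simp only [if_true, Bool.false_eq_true, if_false]
      rw [← Finset.mul_sum, ← Finset.mul_sum, ih]
      ring
end

section
/- For every nonnegative integer n, the sum over all words w of length n over {a,b} of m(bwa) equals α·x·y·(αx+βy)^n, and the sum of m(bwb) equals β·y²·(αx+βy)^n. -/
lemma mWord_cons {R : Type*} [CommRing R] (x y α β : R) (c b : Bool) (rest : List Bool) :
    mWord x y α β (c :: b :: rest) =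
      (cond c x y) * (cond b α β) * mWord x y α β (b :: rest) := by
  cases c <;> cases b <;>
    simp [mWord, pairCount, List.count_cons, pow_succ] <;> ring

lemma sum_aux {R : Type*} [CommRing R] (x y α β : R) (t : Bool) (n : ℕ) :
    ∀ c : Bool, ∑ w : Fin n → Bool, mWord x y α β (c :: (List.ofFn w ++ [t])) =
      (cond c x y) * (cond t (x * α) (y * β)) * (α * x + β * y) ^ n := by
  induction n with
  | zero =>
    intro c
    cases c <;> cases t <;>
      simp [mWord, pairCount] <;> ring
  | succ n ih =>
    intro c
    rw [← (Fin.consEquiv (fun _ : Fin (n + 1) => Bool)).sum_comp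
      (fun w => mWord x y α β (c :: (List.ofFn w ++ [t])))]
    rw [Fintype.sum_prod_type]
    have key : ∀ (b : Bool) (w' : Fin n → Bool),
        mWord x y α β (c :: (List.ofFn ((Fin.consEquiv (fun _ : Fin (n + 1) => Bool)) (b, w')) ++ [t]))
          = (cond c x y) * (cond b α β) * mWord x y α β (b :: (List.ofFn w' ++ [t])) := by
      intro b w'
      have h1 : List.ofFn ((Fin.consEquiv (fun _ : Fin (n + 1) => Bool)) (b, w')) =
          b :: List.ofFn w' := by
        rw [List.ofFn_succ]
        simp [Fin.consEquiv, Fin.cons]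
      rw [h1]
      exact mWord_cons x y α β c b _
    simp only [key]
    rw [Fintype.sum_bool]
    simp only [← Finset.mul_sum, ih]
    simp only [cond_true, cond_false]; ring

/-- Sum over all words `w` of length `n` over `{a,b}` of `m(bwa)` equals
`α x y (αx + βy)^n`, and the sum of `m(bwb)` equals `β y² (αx + βy)^n`. -/
theorem sum_m_bwa_and_bwb {R : Type*} [CommRing R] (x y α β : R) (n : ℕ) :
    (∑ w : Fin n → Bool,
        mWord x y α β (false :: (List.ofFn w ++ [true])) =
      α * x * y * (α * x + β * y) ^ n) ∧
    (∑ w : Fin n → Bool,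
        mWord x y α β (false :: (List.ofFn w ++ [false])) =
      β * y ^ 2 * (α * x + β * y) ^ n) := by
  constructor
  · rw [sum_aux x y α β true n false]; simp; ring
  · rw [sum_aux x y α β false n false]; simp; ring
end

section
/- The number of run-constrained binary strings of length n+2 (equivalently, the number of vertices of the Fibonacci-run graph R_n) equals the Fibonacci number f_{n+2}, where f_0 = 0, f_1 = 1, and f_n = f_{n-1} + f_{n-2}. -/
/-- Run-constrained binary strings (bits encoded as `1 = true`, `0 = false`):
the strings in which every maximal run of 1s is immediately followed by a
strictly longer run of 0s; equivalently (as stated in the paper), the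
concatenations of zero or more words from the infinite alphabet
`R = {0} ∪ {1^i 0^{i+1} : i ≥ 1}`. -/
inductive RunConstrained : List Bool → Prop where
  | nil : RunConstrained []
  | zero {w : List Bool} : RunConstrained w → RunConstrained (false :: w)
  | block {w : List Bool} (i : ℕ) (hi : 1 ≤ i) : RunConstrained w →
      RunConstrained (List.replicate i true ++ List.replicate (i + 1) false ++ w)

/-- Vertices of the Fibonacci-run graph `R_n`: binary strings `w` of length `n`
such that `w00` is a run-constrained string of length `n+2`. -/
def RunVertex (n : ℕ) :=
  {w : Fin n → Bool // RunConstrained (List.ofFn w ++ [false, false])}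

/-- The Fibonacci-run graph `R_n`: two vertices are adjacent iff their
Hamming distance is 1. -/
def runGraph (n : ℕ) : SimpleGraph (RunVertex n) where
  Adj u v := hammingDist u.1 v.1 = 1
  symm := ⟨fun u v h => (hammingDist_comm _ _).trans h⟩
  loopless := ⟨fun u h => by simp [hammingDist_self] at h⟩

namespace RCWork

def rcAux : Bool → ℕ → List Bool → Bool
  | _, k, [] => k == 0
  | true, i, true :: w => rcAux true (i+1) w
  | true, 0, false :: w => rcAux true 0 w
  | true, i+1, false :: w => rcAux false (i+1) w
  | false, 0, true :: w => rcAux true 1 w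
  | false, _+1, true :: _ => false
  | false, 0, false :: w => rcAux false 0 w
  | false, k+1, false :: w => rcAux false k w

lemma rcAux_false_zero : ∀ w, rcAux false 0 w = rcAux true 0 w
  | [] => rfl
  | true :: w => by rw [rcAux.eq_5, rcAux.eq_2]
  | false :: w => by rw [rcAux.eq_7, rcAux.eq_3]; exact rcAux_false_zero w

lemma rcAux_ones : ∀ (i j : ℕ) (w : List Bool),
    rcAux true j (List.replicate i true ++ w) = rcAux true (j + i) w
  | 0, j, w => by simp
  | i+1, j, w => by
      rw [List.replicate_succ, List.cons_append, rcAux.eq_2, rcAux_ones i (j+1) w]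
      ring_nf

lemma rcAux_zeros : ∀ (k : ℕ) (w : List Bool),
    rcAux false k (List.replicate k false ++ w) = rcAux false 0 w
  | 0, w => by simp
  | k+1, w => by
      rw [List.replicate_succ, List.cons_append, rcAux.eq_8]
      exact rcAux_zeros k w

lemma rcAux_of_rc {l : List Bool} (h : RunConstrained l) : rcAux true 0 l = true := by
  induction h with
  | nil => rfl
  | zero _ ih => rwa [rcAux.eq_3]
  | block i hi _ ih =>
      obtain ⟨j, rfl⟩ : ∃ j, i = j + 1 := ⟨i - 1, by omega⟩
      rename_i w _
      rw [List.append_assoc, rcAux_ones, Nat.zero_add,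
        List.replicate_succ, List.cons_append, rcAux.eq_4, rcAux_zeros,
        rcAux_false_zero]
      exact ih

lemma rcAux_zeros_inv : ∀ (w : List Bool) (k : ℕ), rcAux false k w = true →
    ∃ v, w = List.replicate k false ++ v ∧ rcAux true 0 v = true
  | [], k, h => by
      rw [rcAux.eq_1] at h
      simp only [beq_iff_eq] at h
      exact ⟨[], by simp [h], rfl⟩
  | true :: w, 0, h => ⟨true :: w, by simp, by rwa [rcAux.eq_2, ← rcAux.eq_5]⟩
  | true :: w, k+1, h => by rw [rcAux.eq_6] at h; exact absurd h (by simp)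
  | false :: w, 0, h => by
      rw [rcAux.eq_7] at h
      exact ⟨false :: w, by simp, by rwa [rcAux.eq_3, ← rcAux_false_zero]⟩
  | false :: w, k+1, h => by
      rw [rcAux.eq_8] at h
      obtain ⟨v, rfl, hv⟩ := rcAux_zeros_inv w k h
      exact ⟨v, by rw [List.replicate_succ, List.cons_append], hv⟩

lemma rcAux_ones_inv : ∀ (w : List Bool) (i : ℕ), rcAux true (i+1) w = true →
    ∃ j v, w = List.replicate j true ++ List.replicate (i+j+2) false ++ v ∧
      rcAux true 0 v = true
  | [], i, h => by rw [rcAux.eq_1] at h; exact absurd h (by simp)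
  | true :: w, i, h => by
      rw [rcAux.eq_2] at h
      obtain ⟨j, v, rfl, hv⟩ := rcAux_ones_inv w (i+1) h
      refine ⟨j+1, v, ?_, hv⟩
      rw [show i+(j+1)+2 = i+1+j+2 from by ring]
      simp [List.replicate_succ]
  | false :: w, i, h => by
      rw [rcAux.eq_4] at h
      obtain ⟨v, rfl, hv⟩ := rcAux_zeros_inv w (i+1) h
      refine ⟨0, v, ?_, hv⟩
      rw [show i+0+2 = (i+1)+1 from by ring]
      simp [List.replicate_succ]

lemma rc_of_rcAux : ∀ (n : ℕ) (l : List Bool), l.length ≤ n →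
    rcAux true 0 l = true → RunConstrained l
  | 0, [], _, _ => RunConstrained.nil
  | n+1, [], _, _ => RunConstrained.nil
  | n+1, false :: w, hl, h => by
      rw [rcAux.eq_3] at h
      exact RunConstrained.zero (rc_of_rcAux n w (by simpa using hl) h)
  | n+1, true :: w, hl, h => by
      rw [rcAux.eq_2] at h
      obtain ⟨j, v, rfl, hv⟩ := rcAux_ones_inv w 0 h
      have hrc : RunConstrained v := by
        apply rc_of_rcAux n v _ hv
        simp [List.length_append, List.length_replicate] at hl
        omega
      have hb := RunConstrained.block (j+1) (by omega) hrc
      have h2 : (List.replicate (j+1) true ++ List.replicate ((j+1)+1) false ++ v)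
          = true :: (List.replicate j true ++ List.replicate (0+j+2) false ++ v) := by
        rw [show (j+1)+1 = 0+j+2 from by ring, List.replicate_succ]
        simp
      exact h2 ▸ hb

lemma rc_iff (l : List Bool) : RunConstrained l ↔ rcAux true 0 l = true :=
  ⟨rcAux_of_rc, rc_of_rcAux l.length l le_rfl⟩


/-- Number of strings of length `n` accepted by the automaton from state `(b, k)`. -/
def F : Bool → ℕ → ℕ → ℕ
  | _, k, 0 => if k = 0 then 1 else 0
  | true, 0, n+1 => F true 1 n + F true 0 n
  | true, i+1, n+1 => F true (i+2) n + F false (i+1) n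
  | false, 0, n+1 => F true 1 n + F false 0 n
  | false, k+1, n+1 => F false k n

lemma F_false_zero : ∀ n, F false 0 n = F true 0 n
  | 0 => rfl
  | n+1 => by rw [F.eq_4, F.eq_2, F_false_zero n]

lemma F_shift : ∀ (n i : ℕ), F true (i+2) (n+1) = F true (i+1) n
  | 0, i => by rw [F.eq_3]; simp [F]
  | n+1, i => by
      rw [F.eq_3, F_shift n (i+1), F.eq_5, ← F.eq_3]

lemma F_fib : ∀ m, (F true 1 (m+2) = Nat.fib (m+1) ∧ F true 0 (m+2) = Nat.fib (m+2)) ∧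
    (F true 1 (m+3) = Nat.fib (m+2) ∧ F true 0 (m+3) = Nat.fib (m+3))
  | 0 => by norm_num [F]
  | m+1 => by
      obtain ⟨h1, h2⟩ := F_fib m
      refine ⟨h2, ?_, ?_⟩
      · have e1 : F true 1 (m+1+3) = F true 1 (m+2) + F true 0 (m+2) := by
          rw [show m+1+3 = m+3+1 from rfl, F.eq_3, F_shift, F.eq_5, F_false_zero]
        rw [e1, h1.1, h1.2]
        conv_rhs => rw [show m+1+2 = (m+1)+2 from rfl, Nat.fib_add_two]
      · have e1 : F true 0 (m+1+3) = F true 1 (m+3) + F true 0 (m+3) := by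
          rw [show m+1+3 = m+3+1 from rfl, F.eq_2]
        rw [e1, h2.1, h2.2]
        conv_rhs => rw [show m+1+3 = (m+2)+2 from rfl, Nat.fib_add_two]

def boolSplit {α : Type*} (P : Bool → α → Prop) :
    {p : Bool × α // P p.1 p.2} ≃ {a // P true a} ⊕ {a // P false a} where
  toFun x := match x with
    | ⟨(true, a), h⟩ => Sum.inl ⟨a, h⟩
    | ⟨(false, a), h⟩ => Sum.inr ⟨a, h⟩
  invFun x := match x with
    | Sum.inl ⟨a, h⟩ => ⟨(true, a), h⟩
    | Sum.inr ⟨a, h⟩ => ⟨(false, a), h⟩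
  left_inv := by rintro ⟨⟨b, a⟩, h⟩; cases b <;> rfl
  right_inv := by rintro (⟨a, h⟩ | ⟨a, h⟩) <;> rfl

lemma card_cons_split (P : List Bool → Prop) (n : ℕ) :
    Nat.card {w : Fin (n+1) → Bool // P (List.ofFn w)} =
      Nat.card {v : Fin n → Bool // P (true :: List.ofFn v)} +
      Nat.card {v : Fin n → Bool // P (false :: List.ofFn v)} := by
  have e1 : {w : Fin (n+1) → Bool // P (List.ofFn w)} ≃
      {p : Bool × (Fin n → Bool) // P (p.1 :: List.ofFn p.2)} :=
    Equiv.subtypeEquiv (Fin.consEquiv (fun _ : Fin (n+1) => Bool)).symm (by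
      intro w
      rw [List.ofFn_succ]
      rfl)
  rw [Nat.card_congr (e1.trans (boolSplit fun b v => P (b :: List.ofFn v))),
    Nat.card_sum]

lemma card_eq_F : ∀ (n : ℕ) (b : Bool) (k : ℕ),
    Nat.card {w : Fin n → Bool // rcAux b k (List.ofFn w) = true} = F b k n := by
  intro n
  induction n with
  | zero =>
      intro b k
      rcases k with _ | k
      · have : ∀ w : Fin 0 → Bool, rcAux b 0 (List.ofFn w) = true := by
          intro w
          rw [List.ofFn_zero, rcAux.eq_1]
          rfl
        rw [Nat.card_congr (Equiv.subtypeUnivEquiv this)]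
        simp [Nat.card_eq_fintype_card, F]
      · have : IsEmpty {w : Fin 0 → Bool // rcAux b (k+1) (List.ofFn w) = true} := by
          refine ⟨fun x => ?_⟩
          have := x.2
          rw [List.ofFn_zero, rcAux.eq_1] at this
          simp at this
        rw [Nat.card_of_isEmpty]
        simp [F]
  | succ n ih =>
      intro b k
      rw [card_cons_split (fun l => rcAux b k l = true) n]
      rcases b with _ | _
      · rcases k with _ | k
        · -- state (false, 0)
          have h1 : ∀ v : Fin n → Bool, (rcAux false 0 (true :: List.ofFn v) = true)
              = (rcAux true 1 (List.ofFn v) = true) := fun v => by rw [rcAux.eq_5]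
          have h2 : ∀ v : Fin n → Bool, (rcAux false 0 (false :: List.ofFn v) = true)
              = (rcAux false 0 (List.ofFn v) = true) := fun v => by rw [rcAux.eq_7]
          simp only [h1, h2, ih, F.eq_4]
        · -- state (false, k+1)
          have h1 : ∀ v : Fin n → Bool, (rcAux false (k+1) (true :: List.ofFn v) = true)
              = False := fun v => by rw [rcAux.eq_6]; simp
          have h2 : ∀ v : Fin n → Bool, (rcAux false (k+1) (false :: List.ofFn v) = true)
              = (rcAux false k (List.ofFn v) = true) := fun v => by rw [rcAux.eq_8]
          simp only [h1, h2, ih, F.eq_5]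
          have : IsEmpty {v : Fin n → Bool // False} := ⟨fun x => x.2⟩
          rw [Nat.card_of_isEmpty]
          omega
      · rcases k with _ | i
        · -- state (true, 0)
          have h1 : ∀ v : Fin n → Bool, (rcAux true 0 (true :: List.ofFn v) = true)
              = (rcAux true 1 (List.ofFn v) = true) := fun v => by rw [rcAux.eq_2]
          have h2 : ∀ v : Fin n → Bool, (rcAux true 0 (false :: List.ofFn v) = true)
              = (rcAux true 0 (List.ofFn v) = true) := fun v => by rw [rcAux.eq_3]
          simp only [h1, h2, ih, F.eq_2]
        · -- state (true, i+1)
          have h1 : ∀ v : Fin n → Bool, (rcAux true (i+1) (true :: List.ofFn v) = true)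
              = (rcAux true (i+2) (List.ofFn v) = true) := fun v => by rw [rcAux.eq_2]
          have h2 : ∀ v : Fin n → Bool, (rcAux true (i+1) (false :: List.ofFn v) = true)
              = (rcAux false (i+1) (List.ofFn v) = true) := fun v => by rw [rcAux.eq_4]
          simp only [h1, h2, ih, F.eq_3]


lemma rc_ends_one {u : List Bool} (h : RunConstrained u) :
    u = [] ∨ ∃ v, u = v ++ [false] := by
  induction h with
  | nil => exact Or.inl rfl
  | zero _ ih =>
      rcases ih with rfl | ⟨v, rfl⟩
      · exact Or.inr ⟨[], rfl⟩
      · exact Or.inr ⟨false :: v, rfl⟩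
  | block i hi _ ih =>
      rename_i w _
      rcases ih with rfl | ⟨v, rfl⟩
      · refine Or.inr ⟨List.replicate i true ++ List.replicate i false, ?_⟩
        rw [List.replicate_succ' (n := i)]
        simp
      · exact Or.inr ⟨List.replicate i true ++ List.replicate (i+1) false ++ v, by simp⟩

lemma rc_ends_two {u : List Bool} (h : RunConstrained u) :
    u = [] ∨ u = [false] ∨ ∃ v, u = v ++ [false, false] := by
  induction h with
  | nil => exact Or.inl rfl
  | zero _ ih =>
      rcases ih with rfl | rfl | ⟨v, rfl⟩
      · exact Or.inr (Or.inl rfl)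
      · exact Or.inr (Or.inr ⟨[], rfl⟩)
      · exact Or.inr (Or.inr ⟨false :: v, rfl⟩)
  | block i hi _ ih =>
      rename_i w _
      obtain ⟨j, rfl⟩ : ∃ j, i = j + 1 := ⟨i - 1, by omega⟩
      rcases ih with rfl | rfl | ⟨v, rfl⟩
      · refine Or.inr (Or.inr ⟨List.replicate (j+1) true ++ List.replicate j false, ?_⟩)
        rw [show j+1+1 = j+2 from rfl, show (List.replicate (j+2) false : List Bool)
          = List.replicate j false ++ [false, false] from by
            rw [show j+2 = j+1+1 from rfl, List.replicate_succ' (n := j+1),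
              List.replicate_succ' (n := j)]; simp]
        simp
      · refine Or.inr (Or.inr ⟨List.replicate (j+1) true ++ List.replicate (j+1) false, ?_⟩)
        have hrep : (List.replicate (j+1+1) false : List Bool)
            = List.replicate (j+1) false ++ [false] := List.replicate_succ' ..
        rw [hrep]
        simp
      · exact Or.inr (Or.inr ⟨List.replicate (j+1) true ++ List.replicate (j+1+1) false ++ v,
          by simp⟩)

lemma ofFn_snoc {m : ℕ} (v : Fin m → Bool) (c : Bool) :
    List.ofFn (Fin.snoc v c) = List.ofFn v ++ [c] := by
  rw [List.ofFn_succ']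
  simp [Fin.snoc_castSucc, List.concat_eq_append]

lemma ofFn_eq_init {m : ℕ} (w : Fin (m+1) → Bool) :
    List.ofFn w = List.ofFn (Fin.init w) ++ [w (Fin.last m)] := by
  rw [List.ofFn_succ']
  simp only [List.concat_eq_append]
  rfl

lemma card_snoc (P : List Bool → Prop) (m : ℕ)
    (hP : ∀ w : Fin (m+1) → Bool, P (List.ofFn w) → w (Fin.last m) = false) :
    Nat.card {w : Fin (m+1) → Bool // P (List.ofFn w)} =
      Nat.card {w : Fin m → Bool // P (List.ofFn w ++ [false])} := by
  apply Nat.card_congr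
  refine ⟨fun x => ⟨Fin.init x.1, ?_⟩, fun x => ⟨Fin.snoc x.1 false, ?_⟩, ?_, ?_⟩
  · have h2 := x.2
    rw [ofFn_eq_init x.1, hP x.1 x.2] at h2
    exact h2
  · rw [ofFn_snoc]
    exact x.2
  · rintro ⟨w, hw⟩
    apply Subtype.ext
    show Fin.snoc (Fin.init w) false = w
    rw [← hP w hw]
    exact Fin.snoc_init_self w
  · rintro ⟨v, hv⟩
    apply Subtype.ext
    simp

lemma last_of_append {l v : List Bool} {a b : Bool} (h : l ++ [a] = v ++ [b]) : a = b := by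
  have h2 := congrArg List.getLast? h
  simpa using h2

lemma card_rc (m : ℕ) :
    Nat.card {w : Fin m → Bool // RunConstrained (List.ofFn w)} = F true 0 m := by
  rw [← card_eq_F m true 0]
  exact Nat.card_congr (Equiv.subtypeEquivRight fun w => rc_iff _)

lemma ofFn_ne_nil {m : ℕ} (w : Fin (m+1) → Bool) : List.ofFn w ≠ [] := by
  intro h
  have := congrArg List.length h
  simp at this

lemma last_false_of_rc {m : ℕ} (w : Fin (m+1) → Bool)
    (h : RunConstrained (List.ofFn w)) : w (Fin.last m) = false := by
  rcases rc_ends_one h with h1 | ⟨v, hv⟩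
  · exact absurd h1 (ofFn_ne_nil w)
  · rw [ofFn_eq_init w] at hv
    exact last_of_append hv

lemma last_false_of_rc' {m : ℕ} (w : Fin (m+1) → Bool)
    (h : RunConstrained (List.ofFn w ++ [false])) : w (Fin.last m) = false := by
  rcases rc_ends_two h with h1 | h1 | ⟨v, hv⟩
  · exact absurd h1 (by simp)
  · exfalso
    have := congrArg List.length h1
    simp at this
  · have hv2 : List.ofFn w ++ [false] = (v ++ [false]) ++ [false] := by
      rw [hv]; simp
    have hv3 : List.ofFn w = v ++ [false] := by
      have := List.append_inj_left' hv2 (by simp)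
      simpa using this
    rw [ofFn_eq_init w] at hv3
    exact last_of_append hv3

end RCWork

/-- The number of run-constrained binary strings of length `n+2`
(equivalently, the number of vertices of the Fibonacci-run graph `R_n`)
equals the Fibonacci number `f_{n+2}`. -/
theorem card_runVertex (n : ℕ) :
    Nat.card {w : Fin (n + 2) → Bool // RunConstrained (List.ofFn w)} =
        Nat.fib (n + 2) ∧
    Nat.card (RunVertex n) = Nat.fib (n + 2) := by
  have hfib : RCWork.F true 0 (n+2) = Nat.fib (n+2) := (RCWork.F_fib n).1.2
  have h1 : Nat.card {w : Fin (n + 2) → Bool // RunConstrained (List.ofFn w)} =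
      Nat.fib (n + 2) := by rw [RCWork.card_rc, hfib]
  refine ⟨h1, ?_⟩
  have s1 := RCWork.card_snoc (fun l => RunConstrained l) (n+1)
    (fun w h => RCWork.last_false_of_rc w h)
  have s2 := RCWork.card_snoc (fun l => RunConstrained (l ++ [false])) n
    (fun w h => RCWork.last_false_of_rc' w h)
  have h3 : Nat.card {w : Fin n → Bool //
      RunConstrained ((List.ofFn w ++ [false]) ++ [false])} = Nat.card (RunVertex n) := by
    apply Nat.card_congr
    apply Equiv.subtypeEquivRight
    intro w
    rw [List.append_assoc]
    rfl
  rw [← h3, ← s2, ← s1, h1]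
end
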